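/- Let a_N be a sequence with a_N/log N → 2λ√(2γ) for some λ ∈ (0,1), γ > 0, and set K_N = N⁴ (log N)^{-1/2} exp(−a_N²/(2γ log N)). Then for any r > 0 and integers of the form N' = ⌊N/r⌋ − j (j bounded), K'_N := N⁴(log N)^{-1/2} exp(−a_{N'}²/(2γ log N)) satisfies K'_N = (r^{4+4λ²} + o(1)) K_{N'} as N → ∞. -/

import Mathlib

open Filter Topology

/-- Scaling relation of the normalizing sequence `K_N`: if `a_N/log N → 2λ√(2γ)` and
`K_N = N⁴ (log N)^{-1/2} e^{−a_N²/(2γ log N)}`, then for `N' = ⌊N/r⌋ − j`,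
`K'_N := N⁴ (log N)^{-1/2} e^{−a_{N'}²/(2γ log N)}` satisfies
`K'_N = (r^{4+4λ²} + o(1)) K_{N'}` as `N → ∞`. -/
theorem KN_scaling (γ lam : ℝ) (hγ : 0 < γ) (hlam0 : 0 < lam) (hlam1 : lam < 1)
    (a : ℕ → ℝ)
    (ha : Tendsto (fun N : ℕ => a N / Real.log N) atTop
      (nhds (2 * lam * Real.sqrt (2 * γ))))
    (K : ℕ → ℝ)
    (hK : ∀ N : ℕ, K N = (N : ℝ) ^ 4 / Real.sqrt (Real.log N) *
      Real.exp (-(a N) ^ 2 / (2 * γ * Real.log N)))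
    (r : ℝ) (hr : 0 < r) (j : ℕ) :
    Tendsto (fun N : ℕ =>
        ((N : ℝ) ^ 4 / Real.sqrt (Real.log N) *
          Real.exp (-(a (⌊(N : ℝ) / r⌋₊ - j)) ^ 2 / (2 * γ * Real.log N))) /
        K (⌊(N : ℝ) / r⌋₊ - j))
      atTop (nhds (r ^ (4 + 4 * lam ^ 2))) := by
  set s : ℝ := 2 * lam * Real.sqrt (2 * γ) with hs
  set m : ℕ → ℕ := fun N => ⌊(N : ℝ) / r⌋₊ - j with hmdef
  have hcast : Tendsto (fun N : ℕ => (N:ℝ)) atTop atTop := tendsto_natCast_atTop_atTop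
  have hdivr : Tendsto (fun N : ℕ => (N:ℝ)/r) atTop atTop := hcast.atTop_div_const hr
  have hfloor : Tendsto (fun N : ℕ => ⌊(N : ℝ) / r⌋₊) atTop atTop :=
    tendsto_nat_floor_atTop.comp hdivr
  have hmT : Tendsto m atTop atTop := (tendsto_sub_atTop_nat j).comp hfloor
  have hlogN : Tendsto (fun N : ℕ => Real.log N) atTop atTop :=
    Real.tendsto_log_atTop.comp hcast
  have hlogm : Tendsto (fun N : ℕ => Real.log (m N)) atTop atTop :=
    Real.tendsto_log_atTop.comp (tendsto_natCast_atTop_atTop.comp hmT)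
  -- m N / N → 1/r
  have hMN : Tendsto (fun N : ℕ => (m N : ℝ) / N) atTop (nhds (1/r)) := by
    have hlow : Tendsto (fun N : ℕ => 1/r - (1 + (j:ℝ))/(N:ℝ)) atTop (nhds (1/r)) := by
      have h0 : Tendsto (fun N : ℕ => (1 + (j:ℝ))/(N:ℝ)) atTop (nhds 0) :=
        Tendsto.div_atTop tendsto_const_nhds hcast
      simpa using tendsto_const_nhds.sub h0
    refine tendsto_of_tendsto_of_tendsto_of_le_of_le' hlow tendsto_const_nhds ?_ ?_
    · filter_upwards [hfloor.eventually_ge_atTop j, hcast.eventually_ge_atTop 1] with N hjf hN1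
      have hN0 : (0:ℝ) < N := by linarith
      have hcastm : (m N : ℝ) = (⌊(N : ℝ) / r⌋₊ : ℝ) - j := by
        simp only [hmdef]; push_cast [Nat.cast_sub hjf]; ring
      have hfl : (N:ℝ)/r - 1 < (⌊(N : ℝ) / r⌋₊ : ℝ) := by
        have := Nat.sub_one_lt_floor ((N:ℝ)/r); linarith
      have key : (N:ℝ)/r - (1 + j) ≤ (m N : ℝ) := by rw [hcastm]; linarith
      calc 1/r - (1 + (j:ℝ))/N = ((N:ℝ)/r - (1 + j))/N := by field_simp
        _ ≤ (m N : ℝ)/N := by gcongr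
    · filter_upwards [hcast.eventually_ge_atTop 1] with N hN1
      have hN0 : (0:ℝ) < N := by linarith
      have h1 : (m N : ℝ) ≤ (N:ℝ)/r := by
        refine le_trans ?_ (Nat.floor_le (by positivity))
        exact_mod_cast Nat.sub_le _ _
      calc (m N : ℝ)/N ≤ ((N:ℝ)/r)/N := by gcongr
        _ = 1/r := by field_simp
  -- N / m N → r
  have hNM : Tendsto (fun N : ℕ => (N:ℝ) / (m N : ℝ)) atTop (nhds r) := by
    have := hMN.inv₀ (one_div_ne_zero hr.ne')
    simpa [inv_div] using this
  -- log N - log m N → log r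
  have hlogdiff : Tendsto (fun N : ℕ => Real.log N - Real.log (m N)) atTop
      (nhds (Real.log r)) := by
    have hcomp : Tendsto (fun N : ℕ => Real.log ((N:ℝ) / (m N : ℝ))) atTop
        (nhds (Real.log r)) := ((Real.continuousAt_log hr.ne').tendsto).comp hNM
    refine hcomp.congr' ?_
    filter_upwards [hmT.eventually_ge_atTop 1, hcast.eventually_ge_atTop 1] with N hm1 hN1
    have hm0 : ((m N : ℝ)) ≠ 0 := by
      have : (1:ℝ) ≤ (m N : ℝ) := by exact_mod_cast hm1
      linarith
    have hN0 : ((N:ℝ)) ≠ 0 := by linarith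
    rw [Real.log_div hN0 hm0]
  -- 1 / log N → 0
  have hloginv : Tendsto (fun N : ℕ => (Real.log N)⁻¹) atTop (nhds 0) :=
    hlogN.inv_tendsto_atTop
  -- log m / log N → 1
  have hlograt : Tendsto (fun N : ℕ => Real.log (m N) / Real.log N) atTop (nhds 1) := by
    have h1 : Tendsto (fun N : ℕ => 1 - (Real.log N - Real.log (m N)) * (Real.log N)⁻¹)
        atTop (nhds 1) := by
      have := hlogdiff.mul hloginv
      simpa using tendsto_const_nhds.sub this
    refine h1.congr' ?_
    filter_upwards [hlogN.eventually_gt_atTop 0] with N hlN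
    field_simp
    ring
  -- a (m N) / log (m N) → s
  have hA : Tendsto (fun N : ℕ => a (m N) / Real.log (m N)) atTop (nhds s) := ha.comp hmT
  -- exponent limit
  have hFlim : Tendsto (fun N : ℕ =>
      (a (m N) / Real.log (m N))^2 * (2*γ)⁻¹ *
        ((Real.log N - Real.log (m N)) * (Real.log (m N) / Real.log N)))
      atTop (nhds (4 * lam^2 * Real.log r)) := by
    have := ((hA.pow 2).mul (tendsto_const_nhds :
      Tendsto (fun _ : ℕ => (2*γ)⁻¹) atTop (nhds ((2*γ)⁻¹)))).mul (hlogdiff.mul hlograt)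
    have hsq : s^2 * (2*γ)⁻¹ * (Real.log r * 1) = 4 * lam^2 * Real.log r := by
      rw [hs]
      have h2γ : (0:ℝ) ≤ 2*γ := by linarith
      have hc : (2*γ) * (2*γ)⁻¹ = 1 := mul_inv_cancel₀ (by positivity)
      rw [mul_pow, mul_pow, Real.sq_sqrt h2γ, mul_one]
      calc 2^2*lam^2*(2*γ) * (2*γ)⁻¹ * Real.log r
          = 2^2*lam^2*((2*γ)*(2*γ)⁻¹) * Real.log r := by ring
        _ = 4 * lam^2 * Real.log r := by rw [hc]; ring
    rw [← hsq]
    exact this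
  -- the auxiliary function g
  have hg : Tendsto (fun N : ℕ =>
      ((N:ℝ) / (m N : ℝ))^4 * Real.sqrt (Real.log (m N) / Real.log N) *
        Real.exp ((a (m N))^2 * (2*γ)⁻¹ * ((Real.log (m N))⁻¹ - (Real.log N)⁻¹)))
      atTop (nhds (r ^ (4 + 4 * lam ^ 2))) := by
    have hpow : Tendsto (fun N : ℕ => ((N:ℝ) / (m N : ℝ))^4) atTop (nhds (r^4)) := hNM.pow 4
    have hsqrt : Tendsto (fun N : ℕ => Real.sqrt (Real.log (m N) / Real.log N)) atTop
        (nhds 1) := by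
      have := (Real.continuous_sqrt.tendsto 1).comp hlograt
      simpa [Function.comp_def] using this
    have hexp : Tendsto (fun N : ℕ =>
        Real.exp ((a (m N))^2 * (2*γ)⁻¹ * ((Real.log (m N))⁻¹ - (Real.log N)⁻¹))) atTop
        (nhds (Real.exp (4 * lam^2 * Real.log r))) := by
      refine (Real.continuous_exp.tendsto _).comp (hFlim.congr' ?_)
      filter_upwards [hlogm.eventually_gt_atTop 0, hlogN.eventually_gt_atTop 0] with N h1 h2
      field_simp
    have := (hpow.mul hsqrt).mul hexp
    have heq : r^4 * 1 * Real.exp (4 * lam^2 * Real.log r) = r ^ (4 + 4 * lam ^ 2) := by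
      have h4 : r ^ (4:ℝ) = r ^ (4:ℕ) := by
        rw [show (4:ℝ) = ((4:ℕ):ℝ) by norm_num, Real.rpow_natCast]
      rw [Real.rpow_add hr, Real.rpow_def_of_pos hr (4 * lam^2), h4, mul_one]
      ring_nf
    rw [← heq]
    exact this
  -- eventual equality with the target function
  refine hg.congr' ?_
  filter_upwards [hlogm.eventually_gt_atTop 0, hlogN.eventually_gt_atTop 0,
    hmT.eventually_ge_atTop 1, hcast.eventually_ge_atTop 1] with N hlm hlN hm1 hN1
  have hm0 : (0:ℝ) < (m N : ℝ) := by exact_mod_cast Nat.lt_of_lt_of_le Nat.zero_lt_one hm1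
  have hN0 : (0:ℝ) < N := by linarith
  have harw : (⌊(N:ℝ)/r⌋₊ - j) = m N := rfl
  have hE : Real.exp ((a (m N))^2 * (2*γ)⁻¹ * ((Real.log (m N))⁻¹ - (Real.log N)⁻¹))
      = Real.exp (-(a (m N))^2/(2*γ*Real.log N)) /
        Real.exp (-(a (m N))^2/(2*γ*Real.log (m N))) := by
    rw [← Real.exp_sub]
    congr 1
    field_simp
    ring
  have hsm : (0:ℝ) < Real.sqrt (Real.log (m N)) := Real.sqrt_pos.2 hlm
  have hsN : (0:ℝ) < Real.sqrt (Real.log N) := Real.sqrt_pos.2 hlN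
  rw [harw, hK (m N), div_pow, Real.sqrt_div hlm.le, hE]
  field_simp [Real.exp_ne_zero]
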